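/- For density operators ρ and σ on a finite-dimensional Hilbert space, the fidelity satisfies F(ρ,σ) ≥ 2^{-D_max(ρ‖σ)/2}, where D_max(ρ‖σ) = inf{λ ∈ ℝ : ρ ≤ 2^λ σ}. -/

import Mathlib

open Matrix
open scoped ComplexOrder Classical

/-- Square root of a positive semidefinite matrix (junk value `0` otherwise). -/
noncomputable def matSqrt {n : Type*} [Fintype n] [DecidableEq n]
    (A : Matrix n n ℂ) : Matrix n n ℂ :=
  if h : A.PosSemidef then
    (h.1.eigenvectorUnitary : Matrix n n ℂ) * diagonal ((↑) ∘ (√·) ∘ h.1.eigenvalues) *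
      (star h.1.eigenvectorUnitary : Matrix n n ℂ)
  else 0

/-- Trace norm `‖M‖₁ = Tr √(Mᴴ M)`. -/
noncomputable def traceNorm {n : Type*} [Fintype n] [DecidableEq n]
    (M : Matrix n n ℂ) : ℝ :=
  (matSqrt (Mᴴ * M)).trace.re

/-- Fidelity `‖√ρ √σ‖₁`. -/
noncomputable def fidelity {n : Type*} [Fintype n] [DecidableEq n]
    (ρ σ : Matrix n n ℂ) : ℝ :=
  traceNorm (matSqrt ρ * matSqrt σ)

/-- Max-relative entropy `D_max(ρ‖σ) = inf {λ : ρ ≤ 2^λ σ}` (Löwner order);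
when the set is empty `D_max = +∞` and the statement below is vacuous, so we
record the finiteness of `D_max` as the nonemptiness of that set. -/
noncomputable def dmax {n : Type*} [Fintype n] (ρ σ : Matrix n n ℂ) : ℝ :=
  sInf {l : ℝ | ((2 : ℝ) ^ l • σ - ρ).PosSemidef}


section Aux

open Polynomial

variable {n : Type*} [Fintype n] [DecidableEq n]

/-- Square root of a positive semidefinite matrix via its spectral decomposition. -/
noncomputable def Matrix.PosSemidef.sqrt {A : Matrix n n ℂ} (hA : A.PosSemidef) : Matrix n n ℂ :=
  (hA.1.eigenvectorUnitary : Matrix n n ℂ) * diagonal ((↑) ∘ (√·) ∘ hA.1.eigenvalues) *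
    (star hA.1.eigenvectorUnitary : Matrix n n ℂ)

theorem Matrix.PosSemidef.posSemidef_sqrt {A : Matrix n n ℂ} (hA : A.PosSemidef) :
    hA.sqrt.PosSemidef := by
  unfold Matrix.PosSemidef.sqrt
  have hD : (diagonal ((↑) ∘ (√·) ∘ hA.1.eigenvalues) : Matrix n n ℂ).PosSemidef :=
    posSemidef_diagonal_iff.mpr fun i => by simp
  exact hD.mul_mul_conjTranspose_same (hA.1.eigenvectorUnitary : Matrix n n ℂ)

theorem Matrix.PosSemidef.sqrt_mul_self {A : Matrix n n ℂ} (hA : A.PosSemidef) :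
    hA.sqrt * hA.sqrt = A := by
  unfold Matrix.PosSemidef.sqrt
  have hU : (star hA.1.eigenvectorUnitary : Matrix n n ℂ) * hA.1.eigenvectorUnitary = 1 :=
    Matrix.mem_unitaryGroup_iff'.mp hA.1.eigenvectorUnitary.2
  have hD : (diagonal ((↑) ∘ (√·) ∘ hA.1.eigenvalues) : Matrix n n ℂ)
      * diagonal ((↑) ∘ (√·) ∘ hA.1.eigenvalues)
      = (diagonal (RCLike.ofReal ∘ hA.1.eigenvalues) : Matrix n n ℂ) := by
    rw [diagonal_mul_diagonal]
    congr 1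
    funext i
    simp only [Function.comp]
    rw [← Complex.ofReal_mul, Real.mul_self_sqrt (hA.eigenvalues_nonneg i)]
    rfl
  conv_rhs => rw [hA.1.spectral_theorem, Unitary.conjStarAlgAut_apply]
  calc _ = (hA.1.eigenvectorUnitary : Matrix n n ℂ) * diagonal ((↑) ∘ (√·) ∘ hA.1.eigenvalues)
        * ((star hA.1.eigenvectorUnitary : Matrix n n ℂ) * (hA.1.eigenvectorUnitary : Matrix n n ℂ))
        * diagonal ((↑) ∘ (√·) ∘ hA.1.eigenvalues)
        * (star hA.1.eigenvectorUnitary : Matrix n n ℂ) := by simp only [mul_assoc]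
    _ = _ := by
      rw [hU, mul_one, ← hD]
      simp only [mul_assoc]


/-- Conjugation by a unitary matrix as an `ℝ`-algebra homomorphism. -/
noncomputable def conjAH (U : Matrix.unitaryGroup n ℂ) :
    Matrix n n ℂ →ₐ[ℝ] Matrix n n ℂ where
  toFun X := U * X * (star U : Matrix n n ℂ)
  map_one' := by
    simp [Matrix.mem_unitaryGroup_iff.mp U.2]
  map_mul' X Y := by
    have h : (star U : Matrix n n ℂ) * U = 1 := Matrix.mem_unitaryGroup_iff'.mp U.2
    calc (U : Matrix n n ℂ) * (X * Y) * star U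
        = U * X * ((star U : Matrix n n ℂ) * U) * Y * star U := by
          rw [h]; noncomm_ring
      _ = (U * X * star U) * (U * Y * star U) := by noncomm_ring
  map_zero' := by simp
  map_add' X Y := by noncomm_ring
  commutes' r := by
    have : algebraMap ℝ (Matrix n n ℂ) r = r • (1 : Matrix n n ℂ) :=
      Algebra.algebraMap_eq_smul_one r
    rw [this]
    simp [mul_smul_comm, smul_mul_assoc, Matrix.mem_unitaryGroup_iff.mp U.2]

lemma aeval_conj (U : Matrix.unitaryGroup n ℂ) (D : Matrix n n ℂ) (p : ℝ[X]) :
    aeval ((U : Matrix n n ℂ) * D * (star U : Matrix n n ℂ)) p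
      = U * (aeval D p : Matrix n n ℂ) * (star U : Matrix n n ℂ) :=
  aeval_algHom_apply (conjAH U) D p

lemma aeval_diagonal (d : n → ℝ) (p : ℝ[X]) :
    aeval (diagonal (fun i => (d i : ℂ)) : Matrix n n ℂ) p
      = diagonal (fun i => ((p.eval (d i) : ℝ) : ℂ)) := by
  have hd : (diagonal (fun i => (d i : ℂ)) : Matrix n n ℂ)
      = (Matrix.diagonalAlgHom ℝ : (n → ℂ) →ₐ[ℝ] Matrix n n ℂ) (fun i => (d i : ℂ)) := rfl
  rw [hd, aeval_algHom_apply]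
  rw [show (diagonal (fun i => ((p.eval (d i) : ℝ) : ℂ)) : Matrix n n ℂ)
      = (Matrix.diagonalAlgHom ℝ : (n → ℂ) →ₐ[ℝ] Matrix n n ℂ)
        (fun i => ((p.eval (d i) : ℝ) : ℂ)) from rfl]
  congr 1
  funext i
  have h1 : (aeval (fun i => (d i : ℂ)) p) i
      = aeval ((fun i => (d i : ℂ)) i) p :=
    (aeval_algHom_apply (Pi.evalAlgHom ℝ (fun _ => ℂ) i) (fun i => (d i : ℂ)) p).symm
  have h2 : aeval ((d i : ℂ)) p = ((aeval (d i) p : ℝ) : ℂ) := by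
    simpa using aeval_algebraMap_apply ℂ (d i) p
  simp [h1, h2]


lemma sqrt_eq_aeval {A : Matrix n n ℂ} (hA : A.PosSemidef) (p : ℝ[X])
    (hp : ∀ i, p.eval (hA.1.eigenvalues i) = Real.sqrt (hA.1.eigenvalues i)) :
    hA.sqrt = aeval A p := by
  conv_rhs => rw [hA.1.spectral_theorem, Unitary.conjStarAlgAut_apply]
  rw [show (diagonal (RCLike.ofReal ∘ hA.1.eigenvalues) : Matrix n n ℂ)
      = diagonal (fun i => ((hA.1.eigenvalues i : ℝ) : ℂ)) from rfl]
  rw [aeval_conj hA.1.eigenvectorUnitary, aeval_diagonal]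
  rw [Matrix.PosSemidef.sqrt]
  have hd : (diagonal (fun i => ((p.eval (hA.1.eigenvalues i) : ℝ) : ℂ)) : Matrix n n ℂ)
      = diagonal ((↑) ∘ Real.sqrt ∘ hA.1.eigenvalues) := by
    simp only [hp]
    rfl
  rw [hd]

lemma trace_conj (U : Matrix.unitaryGroup n ℂ) (X : Matrix n n ℂ) :
    ((U : Matrix n n ℂ) * X * (star U : Matrix n n ℂ)).trace = X.trace := by
  rw [Matrix.trace_mul_cycle, Matrix.mem_unitaryGroup_iff'.mp U.2, one_mul]

lemma pow_succ_mul (X Y : Matrix n n ℂ) (k : ℕ) :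
    (X * Y) ^ (k + 1) = X * (Y * X) ^ k * Y := by
  induction k with
  | zero => simp
  | succ k ih =>
    rw [pow_succ, ih, pow_succ]
    noncomm_ring

lemma trace_pow_eq (M : Matrix n n ℂ) (k : ℕ) :
    ((Mᴴ * M) ^ k).trace = ((M * Mᴴ) ^ k).trace := by
  cases k with
  | zero => simp
  | succ k =>
    rw [pow_succ_mul Mᴴ M k, Matrix.trace_mul_cycle Mᴴ ((M * Mᴴ) ^ k) M,
      ← pow_succ' (M * Mᴴ) k]



lemma trace_aeval_eq (M : Matrix n n ℂ) (p : ℝ[X]) :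
    (aeval (Mᴴ * M) p : Matrix n n ℂ).trace = (aeval (M * Mᴴ) p : Matrix n n ℂ).trace := by
  rw [aeval_eq_sum_range, aeval_eq_sum_range]
  rw [Matrix.trace_sum, Matrix.trace_sum]
  refine Finset.sum_congr rfl fun k _ => ?_
  rw [Matrix.trace_smul, Matrix.trace_smul, trace_pow_eq M k]

lemma trace_nonneg_of_posSemidef {X : Matrix n n ℂ} (hX : X.PosSemidef) :
    0 ≤ X.trace := by
  rw [Matrix.trace]
  apply Finset.sum_nonneg
  intro i _
  have h := hX.dotProduct_mulVec_nonneg (Pi.single i 1)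
  have hii : star (Pi.single i 1 : n → ℂ) ⬝ᵥ X *ᵥ (Pi.single i 1) = X i i := by
    simp [dotProduct, Matrix.mulVec_single, Pi.single_apply, apply_ite]
  rwa [hii] at h

lemma trace_re_mono {X Y : Matrix n n ℂ} (h : (X - Y).PosSemidef) :
    Y.trace.re ≤ X.trace.re := by
  have h0 := trace_nonneg_of_posSemidef h
  rw [Matrix.trace_sub] at h0
  have := (Complex.le_def.mp h0).1
  simp at this
  linarith

lemma smul_posSemidef {X : Matrix n n ℂ} (hX : X.PosSemidef) {r : ℝ} (hr : 0 ≤ r) :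
    (r • X).PosSemidef := by
  refine PosSemidef.of_dotProduct_mulVec_nonneg ?_ fun x => ?_
  · unfold Matrix.IsHermitian
    rw [Matrix.conjTranspose_smul, hX.1.eq]
    norm_num
  · have h := hX.dotProduct_mulVec_nonneg x
    have : star x ⬝ᵥ (r • X) *ᵥ x = (r : ℂ) * (star x ⬝ᵥ X *ᵥ x) := by
      rw [Matrix.smul_mulVec, dotProduct_smul]
      simp [Complex.real_smul]
    rw [this]
    exact mul_nonneg (by exact_mod_cast Complex.zero_le_real.mpr hr) h


lemma sub_posSemidef_of_sq {A B : Matrix n n ℂ} (hA : A.PosSemidef) (hB : B.PosSemidef)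
    (h : (B * B - A * A).PosSemidef) : (B - A).PosSemidef := by
  have hC : (B - A).IsHermitian := hB.1.sub hA.1
  apply hC.posSemidef_iff_eigenvalues_nonneg.mpr
  intro i
  set μ : ℝ := hC.eigenvalues i with hμ
  set v : n → ℂ := ⇑(hC.eigenvectorBasis i) with hv
  have hveq : (B - A) *ᵥ v = (μ : ℂ) • v := by
    simpa [hv, hμ] using hC.mulVec_eigenvectorBasis i
  have hvne : v ≠ 0 := by
    intro h0
    have := hC.eigenvectorBasis.orthonormal.1 i
    rw [hv] at h0
    have : ‖hC.eigenvectorBasis i‖ = 1 := hC.eigenvectorBasis.orthonormal.1 i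
    have hz : hC.eigenvectorBasis i = 0 := by
      ext j
      exact congrFun h0 j
    rw [hz] at this
    simp at this
  -- decompose B*B - A*A = B*(B-A) + (B-A)*A
  have hdecomp : B * B - A * A = B * (B - A) + (B - A) * A := by noncomm_ring
  have hq := h.dotProduct_mulVec_nonneg v
  rw [hdecomp] at hq
  -- star v ⬝ᵥ (B*(B-A)) *ᵥ v = μ * (star v ⬝ᵥ B *ᵥ v)
  have h1 : star v ⬝ᵥ (B * (B - A)) *ᵥ v = (μ : ℂ) * (star v ⬝ᵥ B *ᵥ v) := by
    rw [← Matrix.mulVec_mulVec, hveq]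
    rw [Matrix.mulVec_smul, dotProduct_smul]
    simp [Complex.real_smul]
  have h2 : star v ⬝ᵥ ((B - A) * A) *ᵥ v = (μ : ℂ) * (star v ⬝ᵥ A *ᵥ v) := by
    rw [← Matrix.mulVec_mulVec]
    have this : star v ⬝ᵥ (B - A) *ᵥ (A *ᵥ v) = star ((B - A) *ᵥ v) ⬝ᵥ (A *ᵥ v) := by
      conv_rhs => rw [Matrix.star_mulVec, hC.eq]
      rw [Matrix.dotProduct_mulVec]
    rw [this, hveq]
    rw [star_smul, smul_dotProduct]
    simp [Complex.real_smul]
  rw [Matrix.add_mulVec, dotProduct_add, h1, h2, ← mul_add] at hq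
  set qB : ℂ := star v ⬝ᵥ B *ᵥ v with hqB
  set qA : ℂ := star v ⬝ᵥ A *ᵥ v with hqA
  have hqBn : 0 ≤ qB := hB.dotProduct_mulVec_nonneg v
  have hqAn : 0 ≤ qA := hA.dotProduct_mulVec_nonneg v
  by_cases hs : (qB + qA) = 0
  · -- both zero, so A v = 0 and B v = 0, hence μ • v = 0
    have hqA0 : qA = 0 := by
      have h1' : 0 ≤ qA.re := by simpa using (Complex.le_def.mp hqAn).1
      have h2' : 0 ≤ qB.re := by simpa using (Complex.le_def.mp hqBn).1
      have h3' : qA.im = 0 := by simpa using (Complex.le_def.mp hqAn).2.symm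
      have hsum0 : qB.re + qA.re = 0 := by simpa using congrArg Complex.re hs
      exact Complex.ext (by simp only [Complex.zero_re]; linarith) (by simpa using h3')
    have hqB0 : qB = 0 := by rwa [hqA0, add_zero] at hs
    have hAv : A *ᵥ v = 0 := (hA.dotProduct_mulVec_zero_iff v).mp hqA0
    have hBv : B *ᵥ v = 0 := (hB.dotProduct_mulVec_zero_iff v).mp hqB0
    have : (μ : ℂ) • v = 0 := by
      rw [← hveq, Matrix.sub_mulVec, hAv, hBv, sub_zero]
    rcases smul_eq_zero.mp this with h' | h'
    · exact le_of_eq (by exact_mod_cast h'.symm)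
    · exact absurd h' hvne
  · -- qB + qA > 0 in re, so μ ≥ 0
    have hsum : 0 ≤ qB + qA := add_nonneg hqBn hqAn
    have hre : 0 < (qB + qA).re := by
      rcases lt_or_eq_of_le (Complex.le_def.mp hsum).1 with h' | h'
      · exact h'
      · exfalso
        apply hs
        have him := (Complex.le_def.mp hsum).2
        exact Complex.ext h'.symm him.symm
    have hqre := (Complex.le_def.mp hq).1
    have : ((μ : ℂ) * (qB + qA)).re = μ * (qB + qA).re := by
      have him := (Complex.le_def.mp hsum).2
      simp [Complex.mul_re, ← him]
    rw [this] at hqre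
    have hqre' : 0 ≤ μ * (qB + qA).re := by simpa using hqre
    show (0:ℝ) ≤ μ
    nlinarith [hre, hqre']




lemma trace_sqrt_conj_eq (M : Matrix n n ℂ) :
    ((posSemidef_conjTranspose_mul_self M).sqrt).trace
      = ((posSemidef_self_mul_conjTranspose M).sqrt).trace := by
  set hA := posSemidef_conjTranspose_mul_self M
  set hB := posSemidef_self_mul_conjTranspose M
  set s : Finset ℝ := (Finset.univ.image hA.1.eigenvalues) ∪ (Finset.univ.image hB.1.eigenvalues)
    with hs
  set p : ℝ[X] := Lagrange.interpolate s id Real.sqrt with hpdef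
  have hnode : ∀ x ∈ s, p.eval x = Real.sqrt x := by
    intro x hx
    exact Lagrange.eval_interpolate_at_node (v := id) Real.sqrt (Set.injOn_id _) hx
  have hpA : ∀ i, p.eval (hA.1.eigenvalues i) = Real.sqrt (hA.1.eigenvalues i) := fun i =>
    hnode _ (by simp [hs])
  have hpB : ∀ i, p.eval (hB.1.eigenvalues i) = Real.sqrt (hB.1.eigenvalues i) := fun i =>
    hnode _ (by simp [hs])
  rw [sqrt_eq_aeval hA p hpA, sqrt_eq_aeval hB p hpB, trace_aeval_eq M p]

lemma matSqrt_eq {A : Matrix n n ℂ} (hA : A.PosSemidef) : matSqrt A = hA.sqrt := dif_pos hA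

end Aux

theorem fidelity_ge_two_rpow_neg_dmax {n : Type*} [Fintype n] [DecidableEq n]
    (ρ σ : Matrix n n ℂ) (hρ : ρ.PosSemidef) (hρ1 : ρ.trace = 1)
    (hσ : σ.PosSemidef) (hσ1 : σ.trace = 1)
    (hfin : {l : ℝ | ((2 : ℝ) ^ l • σ - ρ).PosSemidef}.Nonempty) :
    (2 : ℝ) ^ (-(dmax ρ σ / 2)) ≤ fidelity ρ σ := by
  classical
  -- opaque square roots
  have haPSD : (matSqrt ρ).PosSemidef := by rw [matSqrt_eq hρ]; exact hρ.posSemidef_sqrt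
  have hbPSD : (matSqrt σ).PosSemidef := by rw [matSqrt_eq hσ]; exact hσ.posSemidef_sqrt
  have ha2 : matSqrt ρ * matSqrt ρ = ρ := by rw [matSqrt_eq hρ]; exact hρ.sqrt_mul_self
  have hb2 : matSqrt σ * matSqrt σ = σ := by rw [matSqrt_eq hσ]; exact hσ.sqrt_mul_self
  set a := matSqrt ρ with hadef
  set b := matSqrt σ with hbdef
  have haH : aᴴ = a := haPSD.1
  have hbH : bᴴ = b := hbPSD.1
  set M : Matrix n n ℂ := a * b with hM
  have hMH : Mᴴ = b * a := by rw [hM, Matrix.conjTranspose_mul, haH, hbH]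
  have hMM : (M * Mᴴ).PosSemidef := posSemidef_self_mul_conjTranspose M
  have hMMH : M * Mᴴ = a * σ * a := by
    rw [hM, hMH, ← hb2]; noncomm_ring
  have hFeq : fidelity ρ σ = hMM.sqrt.trace.re := by
    rw [fidelity, traceNorm, ← hadef, ← hbdef, ← hM,
      matSqrt_eq (posSemidef_conjTranspose_mul_self M)]
    exact congrArg Complex.re (trace_sqrt_conj_eq M)
  rw [hFeq]
  set F : ℝ := hMM.sqrt.trace.re with hF
  set S := {l : ℝ | ((2 : ℝ) ^ l • σ - ρ).PosSemidef} with hS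
  -- key bound for each l in S
  have key : ∀ l ∈ S, (2 : ℝ) ^ (-(l / 2)) ≤ F := by
    intro l hl
    set c : ℝ := (2 : ℝ) ^ (-(l / 2)) with hc
    have hc0 : 0 ≤ c := (Real.rpow_pos_of_pos two_pos _).le
    have hcc : c * c = (2 : ℝ) ^ (-l) := by
      rw [hc, ← Real.rpow_add two_pos]; ring_nf
    have h2l : (0:ℝ) ≤ (2 : ℝ) ^ (-l) := (Real.rpow_pos_of_pos two_pos _).le
    have hσρ : ((2 : ℝ) ^ (-l) • ((2 : ℝ) ^ l • σ - ρ)).PosSemidef :=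
      smul_posSemidef hl h2l
    have hσρ' : (2 : ℝ) ^ (-l) • ((2 : ℝ) ^ l • σ - ρ) = σ - (2 : ℝ) ^ (-l) • ρ := by
      rw [smul_sub, smul_smul, ← Real.rpow_add two_pos]
      norm_num
    rw [hσρ'] at hσρ
    have hconj : (a * (σ - (2 : ℝ) ^ (-l) • ρ) * aᴴ).PosSemidef :=
      hσρ.mul_mul_conjTranspose_same a
    rw [haH] at hconj
    have hρρ : a * ρ * a = ρ * ρ := by rw [← ha2]; noncomm_ring
    have hexp : a * (σ - (2 : ℝ) ^ (-l) • ρ) * a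
        = M * Mᴴ - (c • ρ) * (c • ρ) := by
      rw [hMMH, smul_mul_smul_comm, hcc, mul_sub, sub_mul, Matrix.mul_smul, Matrix.smul_mul, hρρ]
    rw [hexp] at hconj
    have hcρ : (c • ρ).PosSemidef := smul_posSemidef hρ hc0
    have hmono := sub_posSemidef_of_sq hcρ hMM.posSemidef_sqrt
      (by rwa [hMM.sqrt_mul_self])
    have htr := trace_re_mono hmono
    have htrc : (c • ρ).trace.re = c := by
      rw [Matrix.trace_smul, hρ1]
      simp
    rwa [htrc] at htr
  -- pass to the infimum via continuity
  set t : ℝ := dmax ρ σ with ht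
  have htend : Filter.Tendsto (fun ε : ℝ => (2:ℝ) ^ (-((t + ε) / 2)))
      (nhdsWithin 0 (Set.Ioi 0)) (nhds ((2:ℝ) ^ (-(t / 2)))) := by
    have hcont : Continuous fun ε : ℝ => (2:ℝ) ^ (-((t + ε) / 2)) := by
      simp_rw [Real.rpow_def_of_pos (by norm_num : (0:ℝ) < 2)]
      fun_prop
    have := (hcont.tendsto 0).mono_left (nhdsWithin_le_nhds (s := Set.Ioi (0:ℝ)))
    simpa using this
  have hev : ∀ᶠ ε in nhdsWithin 0 (Set.Ioi 0), (2:ℝ) ^ (-((t + ε) / 2)) ≤ F := by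
    filter_upwards [self_mem_nhdsWithin] with ε hε
    obtain ⟨l, hlS, hlt⟩ := Real.lt_sInf_add_pos hfin hε
    have h1 : (2:ℝ) ^ (-((t + ε) / 2)) ≤ (2:ℝ) ^ (-(l / 2)) := by
      apply Real.rpow_le_rpow_of_exponent_le one_le_two
      have hlt' : l < t + ε := by rw [ht, dmax]; exact hlt
      linarith
    exact h1.trans (key l hlS)
  exact le_of_tendsto htend hev
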